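/- Let k ∈ ℝ, k ≠ 0, let ε ∈ {1, −1} and C₁ ∈ ℝ with C₁² + ε/k² ≥ 0. Define u(t) = √(C₁² + ε/k²)·sin(2·√(2/3)·k·t) + C₁, and let J ⊆ ℝ be an open interval on which u > 0; set l(t) = √(u(t)) for t ∈ J. Then l satisfies on J the ordinary differential equation k² + (3/2)·l''(t)/l(t) = −ε/l(t)⁴. In particular, for ε = −1 (respectively ε = +1) the function l² = √(C₁² ∓ 1/k²)·sin(2√(2/3)·k·t) + C₁ solves k² + (3/2)·l̈/l = c/l⁴ with c = ±1. Moreover, the function l(t) = C₁·sin(√(2/3)·k·t) satisfies k² + (3/2)·l''(t)/l(t) = 0 at every t where l(t) ≠ 0. -/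

import Mathlib

open Real


lemma hasDerivAt_csin (c ω s : ℝ) :
    HasDerivAt (fun x : ℝ => c * Real.sin (ω * x)) (c * ω * Real.cos (ω * s)) s := by
  have h1 : HasDerivAt (fun x : ℝ => ω * x) ω s := by
    simpa using (hasDerivAt_id s).const_mul ω
  have h2 := ((Real.hasDerivAt_sin (ω * s)).comp s h1).const_mul c
  rw [show c * ω * Real.cos (ω * s) = c * (Real.cos (ω * s) * ω) by ring]; exact h2

lemma hasDerivAt_ccos (c ω s : ℝ) :
    HasDerivAt (fun x : ℝ => c * Real.cos (ω * x)) (-(c * ω * Real.sin (ω * s))) s := by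
  have h1 : HasDerivAt (fun x : ℝ => ω * x) ω s := by
    simpa using (hasDerivAt_id s).const_mul ω
  have h2 := ((Real.hasDerivAt_cos (ω * s)).comp s h1).const_mul c
  rw [show -(c * ω * Real.sin (ω * s)) = c * (-Real.sin (ω * s) * ω) by ring]; exact h2


/-- the dilatation factor `l = √u` with
`u(t) = √(C₁² + ε/k²)·sin(2√(2/3)·k·t) + C₁` solves
`k² + (3/2)·l''/l = -ε/l⁴` on any open interval where `u > 0`; moreover
`l(t) = C₁·sin(√(2/3)·k·t)` solves `k² + (3/2)·l''/l = 0` wherever `l ≠ 0`. -/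
theorem dilatation_factor_ode
    (k : ℝ) (hk : k ≠ 0) (ε : ℝ) (hε : ε = 1 ∨ ε = -1)
    (C₁ : ℝ) (hC : C₁ ^ 2 + ε / k ^ 2 ≥ 0) (a b : ℝ)
    (hpos : ∀ t ∈ Set.Ioo a b,
      Real.sqrt (C₁ ^ 2 + ε / k ^ 2) * Real.sin (2 * Real.sqrt (2 / 3) * k * t)
        + C₁ > 0) :
    (∀ t ∈ Set.Ioo a b,
      k ^ 2
        + (3 / 2) *
          deriv (deriv (fun s =>
            Real.sqrt (Real.sqrt (C₁ ^ 2 + ε / k ^ 2)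
              * Real.sin (2 * Real.sqrt (2 / 3) * k * s) + C₁))) t
          / Real.sqrt (Real.sqrt (C₁ ^ 2 + ε / k ^ 2)
              * Real.sin (2 * Real.sqrt (2 / 3) * k * t) + C₁)
      = -ε / (Real.sqrt (Real.sqrt (C₁ ^ 2 + ε / k ^ 2)
              * Real.sin (2 * Real.sqrt (2 / 3) * k * t) + C₁)) ^ 4)
    ∧ ∀ (C : ℝ) (t : ℝ), C * Real.sin (Real.sqrt (2 / 3) * k * t) ≠ 0 →
        k ^ 2
          + (3 / 2) *
            deriv (deriv (fun s => C * Real.sin (Real.sqrt (2 / 3) * k * s))) t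
            / (C * Real.sin (Real.sqrt (2 / 3) * k * t)) = 0 := by
  constructor
  · intro t ht
    set A : ℝ := Real.sqrt (C₁ ^ 2 + ε / k ^ 2) with hA
    set ω : ℝ := 2 * Real.sqrt (2 / 3) * k with hω
    set u : ℝ → ℝ := fun s => A * Real.sin (ω * s) + C₁ with hudef
    -- the goal's argument `2 * √(2/3) * k * s` is definitionally `ω * s`
    have hA2 : A ^ 2 = C₁ ^ 2 + ε / k ^ 2 := Real.sq_sqrt hC
    have hω2 : ω ^ 2 = 8 / 3 * k ^ 2 := by
      rw [hω]; rw [mul_pow, mul_pow, Real.sq_sqrt (by norm_num : (0:ℝ) ≤ 2 / 3)]; ring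
    have hu' : ∀ s : ℝ, HasDerivAt u (A * ω * Real.cos (ω * s)) s := fun s =>
      (hasDerivAt_csin A ω s).add_const C₁
    have hupos : ∀ s ∈ Set.Ioo a b, 0 < u s := by
      intro s hs; exact hpos s hs
    -- derivative of l = √u on the interval
    set g : ℝ → ℝ := fun s => A * ω * Real.cos (ω * s) / (2 * Real.sqrt (u s)) with hgdef
    have hl : ∀ s ∈ Set.Ioo a b, HasDerivAt (fun x => Real.sqrt (u x)) (g s) s := by
      intro s hs
      have h := (Real.hasDerivAt_sqrt (ne_of_gt (hupos s hs))).comp s (hu' s)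
      refine h.congr_deriv ?_
      simp only [hgdef]
      ring
    have hmem : Set.Ioo a b ∈ nhds t := (isOpen_Ioo).mem_nhds ht
    have hev : deriv (fun x => Real.sqrt (u x)) =ᶠ[nhds t] g := by
      filter_upwards [hmem] with s hs
      exact (hl s hs).deriv
    have hdd : deriv (deriv (fun x => Real.sqrt (u x))) t = deriv g t := hev.deriv_eq
    -- compute deriv g t
    have hSpos : 0 < Real.sqrt (u t) := Real.sqrt_pos.mpr (hupos t ht)
    set S : ℝ := Real.sqrt (u t) with hS
    have hS2 : S ^ 2 = u t := Real.sq_sqrt (le_of_lt (hupos t ht))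
    have hN : HasDerivAt (fun s => A * ω * Real.cos (ω * s))
        (-(A * ω * ω * Real.sin (ω * t))) t := hasDerivAt_ccos (A * ω) ω t
    have hD : HasDerivAt (fun s => 2 * Real.sqrt (u s)) (2 * g t) t :=
      (hl t ht).const_mul 2
    have hDne : 2 * S ≠ 0 := by positivity
    have hg' : HasDerivAt g
        ((-(A * ω * ω * Real.sin (ω * t)) * (2 * S)
          - A * ω * Real.cos (ω * t) * (2 * g t)) / (2 * S) ^ 2) t := hN.div hD hDne
    rw [hdd, hg'.deriv]
    -- now pure algebra
    have hgt : g t = A * ω * Real.cos (ω * t) / (2 * S) := rfl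
    have hut : u t = A * Real.sin (ω * t) + C₁ := rfl
    have hsc : Real.sin (ω * t) ^ 2 + Real.cos (ω * t) ^ 2 = 1 := Real.sin_sq_add_cos_sq _
    set si := Real.sin (ω * t)
    set co := Real.cos (ω * t)
    rw [hgt]
    have hk2 : k ^ 2 ≠ 0 := pow_ne_zero 2 hk
    have hA2' : A ^ 2 * k ^ 2 = C₁ ^ 2 * k ^ 2 + ε := by
      field_simp at hA2 ⊢
      linarith [hA2]
    have hSne : S ≠ 0 := ne_of_gt hSpos
    rw [hut] at hS2
    field_simp
    linear_combination (-6*A*si*S^2 - 3*A^2*co^2) * hω2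
      + (-8*k^2*A^2) * hsc
      + (8*k^2*(S^2 - A*si + C₁)) * hS2
      + (-8) * hA2'
  · intro C t hL
    set ω : ℝ := Real.sqrt (2 / 3) * k with hω
    have hω2 : ω ^ 2 = 2 / 3 * k ^ 2 := by
      rw [hω, mul_pow, Real.sq_sqrt (by norm_num : (0:ℝ) ≤ 2 / 3)]
    have harg : ∀ s : ℝ, Real.sqrt (2/3) * k * s = ω * s := fun s => by rw [hω]
    have hd1 : deriv (fun s => C * Real.sin (Real.sqrt (2/3) * k * s))
        = fun s => C * ω * Real.cos (ω * s) := by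
      funext s
      have : (fun s : ℝ => C * Real.sin (Real.sqrt (2/3) * k * s))
          = fun s => C * Real.sin (ω * s) := by
        funext x; rw [harg]
      rw [this]
      exact (hasDerivAt_csin C ω s).deriv
    have hd2 : deriv (deriv (fun s => C * Real.sin (Real.sqrt (2/3) * k * s))) t
        = -(C * ω * ω * Real.sin (ω * t)) := by
      rw [hd1]
      have := (hasDerivAt_ccos (C * ω) ω t).deriv
      rw [this]
    rw [hd2, harg]
    have hL' : C * Real.sin (ω * t) ≠ 0 := by rw [← harg]; exact hL
    have hC0 : C ≠ 0 := left_ne_zero_of_mul hL'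
    have hs0 : Real.sin (ω * t) ≠ 0 := right_ne_zero_of_mul hL'
    field_simp
    linear_combination (-3*k^2) * Real.sq_sqrt (show (0:ℝ) ≤ 2/3 by norm_num)
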